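/- Let Q_0 be a probability measure on 𝔻^∞ such that for every n ≥ 0 and every bounded Borel f : 𝔻^{n+1} → ℝ, ∫ f(α_0, …, α_n) dQ_0(α) = E_Q[ f(α_0, …, α_n) · |φ_{n+1}(1)|^{-2} ]. Then the pushforward of Q_0 under the map α ↦ (γ_k)_{k≥0} (the modified Verblunsky coefficients) is the product measure on 𝔻^∞ whose k-th marginal is the size-biased law P_𝔻(z,1) Λ_k(dz), where Λ_k is the law of α_k under Q. In particular, under Q_0 the modified Verblunsky coefficients (γ_k) are mutually independent with Q_0(γ_k ∈ dz) = P_𝔻(z,1) Q(γ_k ∈ dz). -/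

import Mathlib

open Complex Finset

/-- `ρ_k = √(1 − |α_k|²)`. -/
noncomputable def rhoV (α : ℕ → ℂ) (k : ℕ) : ℝ :=
  Real.sqrt (1 - ‖α k‖ ^ 2)

/-- The coupled Szegő recursion for the *normalized* orthogonal polynomials:
`szego α n z = (φ_n(z), φ_n^*(z))` where `φ_0 = φ_0^* = 1`,
`φ_{n+1}(z) = ρ_n⁻¹ (z φ_n(z) − conj(α_n) φ_n^*(z))` and
`φ_{n+1}^*(z) = ρ_n⁻¹ (φ_n^*(z) − α_n z φ_n(z))`. -/
noncomputable def szego (α : ℕ → ℂ) : ℕ → ℂ → ℂ × ℂ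
  | 0, _ => (1, 1)
  | n + 1, z =>
    let p := szego α n z
    (((rhoV α n : ℂ))⁻¹ * (z * p.1 - (starRingEnd ℂ) (α n) * p.2),
      ((rhoV α n : ℂ))⁻¹ * (p.2 - α n * z * p.1))

/-- `φ_n(z; α)`, the `n`-th normalized Szegő polynomial. -/
noncomputable def phiN (α : ℕ → ℂ) (n : ℕ) (z : ℂ) : ℂ := (szego α n z).1

/-- `φ_n^*(z; α)`, the `n`-th reversed normalized Szegő polynomial. -/
noncomputable def phiNStar (α : ℕ → ℂ) (n : ℕ) (z : ℂ) : ℂ := (szego α n z).2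

/-- `ψ_n(z; α)`, the `n`-th second kind polynomial: same recursion with `α` replaced by `−α`. -/
noncomputable def psiN (α : ℕ → ℂ) (n : ℕ) (z : ℂ) : ℂ := phiN (fun k => -(α k)) n z

/-- The Prüfer/Blaschke quantities: `B_0(z) = z`,
`B_{n+1}(z) = z B_n(z) (1 − conj(α_n B_n(z)))/(1 − α_n B_n(z))`. -/
noncomputable def BV (α : ℕ → ℂ) : ℕ → ℂ → ℂ
  | 0, z => z
  | n + 1, z =>
    z * BV α n z *
      ((1 - (starRingEnd ℂ) (α n * BV α n z)) / (1 - α n * BV α n z))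

/-- The modified Verblunsky coefficients `γ_k = α_k B_k(1)`. -/
noncomputable def gammaV (α : ℕ → ℂ) (k : ℕ) : ℂ := α k * BV α k 1

/-- The Poisson kernel of the unit disk at the boundary point `1`:
`P_𝔻(z,1) = (1 − |z|²)/|1 − z|²`. -/
noncomputable def poissonD (z : ℂ) : ℝ :=
  (1 - ‖z‖ ^ 2) / ‖1 - z‖ ^ 2

/-- The recursion `X_{-1} = 0`, `Y_{-1} = 1`,
`X_n = X_{n-1} + 2 Y_{n-1} Im(γ_n/(1−γ_n))`, `Y_n = Y_{n-1} (1 + 2 Re(γ_n/(1−γ_n)))`: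
`XY γ (n+1) = (X_n, Y_n)` and `XY γ 0 = (X_{-1}, Y_{-1})`. -/
noncomputable def XY (γ : ℕ → ℂ) : ℕ → ℝ × ℝ
  | 0 => (0, 1)
  | n + 1 =>
    let p := XY γ n
    (p.1 + 2 * p.2 * (γ n / (1 - γ n)).im, p.2 * (1 + 2 * (γ n / (1 - γ n)).re))

open MeasureTheory ProbabilityTheory Filter

/- dependence lemmas -/
lemma szego_congr {α β : ℕ → ℂ} (n : ℕ) (z : ℂ) (h : ∀ k < n, α k = β k) :
    szego α n z = szego β n z := by
  induction n with
  | zero => rfl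
  | succ n ih =>
    have h1 : ∀ k < n, α k = β k := fun k hk => h k (Nat.lt_succ_of_lt hk)
    have hn : α n = β n := h n (Nat.lt_succ_self n)
    simp only [szego, ih h1, rhoV, hn]

lemma BV_congr {α β : ℕ → ℂ} (n : ℕ) (z : ℂ) (h : ∀ k < n, α k = β k) :
    BV α n z = BV β n z := by
  induction n with
  | zero => rfl
  | succ n ih =>
    have h1 : ∀ k < n, α k = β k := fun k hk => h k (Nat.lt_succ_of_lt hk)
    have hn : α n = β n := h n (Nat.lt_succ_self n)
    simp only [BV, ih h1, hn]

lemma gammaV_congr {α β : ℕ → ℂ} (k : ℕ) (h : ∀ j < k + 1, α j = β j) :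
    gammaV α k = gammaV β k := by
  unfold gammaV
  rw [BV_congr k 1 (fun j hj => h j (Nat.lt_succ_of_lt hj)), h k (Nat.lt_succ_self k)]

/- unimodularity -/
lemma BV_one_sub_ne {α : ℕ → ℂ} {n : ℕ} (hB : ‖BV α n 1‖ = 1)
    (hα : ‖α n‖ < 1) : 1 - α n * BV α n 1 ≠ 0 := by
  intro h
  have : α n * BV α n 1 = 1 := by linear_combination -h
  have := congrArg (fun x : ℂ => ‖x‖) this
  rw [norm_mul, hB, mul_one, norm_one] at this
  exact absurd this (ne_of_lt hα)

lemma abs_BV_one {α : ℕ → ℂ} (n : ℕ) (h : ∀ k < n, ‖α k‖ < 1) :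
    ‖BV α n 1‖ = 1 := by
  induction n with
  | zero => simp [BV]
  | succ n ih =>
    have h1 := ih (fun k hk => h k (Nat.lt_succ_of_lt hk))
    have hα := h n (Nat.lt_succ_self n)
    have hne := BV_one_sub_ne h1 hα
    have habs : ‖1 - (starRingEnd ℂ) (α n * BV α n 1)‖ =
        ‖1 - α n * BV α n 1‖ := by
      rw [show (1 : ℂ) - (starRingEnd ℂ) (α n * BV α n 1) =
        (starRingEnd ℂ) (1 - α n * BV α n 1) by simp [map_sub, map_one], Complex.norm_conj]
    show ‖1 * BV α n 1 *
      ((1 - (starRingEnd ℂ) (α n * BV α n 1)) / (1 - α n * BV α n 1))‖ = 1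
    rw [norm_mul, norm_mul, norm_div, norm_one, one_mul, habs, h1, one_mul,
      div_self (fun hc => hne (norm_eq_zero.1 hc))]

lemma abs_gammaV_lt {α : ℕ → ℂ} (k : ℕ) (h : ∀ j < k + 1, ‖α j‖ < 1) :
    ‖gammaV α k‖ < 1 := by
  unfold gammaV
  rw [norm_mul, abs_BV_one k (fun j hj => h j (Nat.lt_succ_of_lt hj)), mul_one]
  exact h k (Nat.lt_succ_self k)

/- ratio lemma -/
lemma phi_star_ratio {α : ℕ → ℂ} (n : ℕ) (h : ∀ k < n, ‖α k‖ < 1) :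
    phiNStar α n 1 ≠ 0 ∧ phiN α n 1 = BV α n 1 * phiNStar α n 1 := by
  induction n with
  | zero => exact ⟨one_ne_zero, by simp [phiN, phiNStar, szego, BV]⟩
  | succ n ih =>
    obtain ⟨hS, hP⟩ := ih (fun k hk => h k (Nat.lt_succ_of_lt hk))
    have hα := h n (Nat.lt_succ_self n)
    have hB1 := abs_BV_one n (fun k hk => h k (Nat.lt_succ_of_lt hk))
    have hne := BV_one_sub_ne hB1 hα
    have hρ : (0:ℝ) < rhoV α n := by
      apply Real.sqrt_pos.2
      nlinarith [norm_nonneg (α n), sq_nonneg (‖α n‖)]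
    have hρc : ((rhoV α n : ℝ) : ℂ) ≠ 0 := by
      exact_mod_cast ne_of_gt hρ
    set B := BV α n 1 with hBdef
    set S := phiNStar α n 1 with hSdef
    have hstar : phiNStar α (n+1) 1 = ((rhoV α n : ℝ) : ℂ)⁻¹ * (S * (1 - α n * B)) := by
      show (szego α (n+1) 1).2 = _
      simp only [szego]
      rw [show (szego α n 1).2 = S from rfl, show (szego α n 1).1 = phiN α n 1 from rfl, hP]
      ring
    have hnsq : Complex.normSq B = 1 := by
      rw [Complex.normSq_eq_norm_sq, hB1]; norm_num
    have hBconj : B * (starRingEnd ℂ) (α n * B) = (starRingEnd ℂ) (α n) := by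
      rw [map_mul, show B * ((starRingEnd ℂ) (α n) * (starRingEnd ℂ) B)
        = (starRingEnd ℂ) (α n) * (B * (starRingEnd ℂ) B) by ring, Complex.mul_conj, hnsq]
      norm_num
    have hBsucc : BV α (n+1) 1 = (B - (starRingEnd ℂ) (α n)) / (1 - α n * B) := by
      show 1 * B * ((1 - (starRingEnd ℂ) (α n * B)) / (1 - α n * B)) = _
      rw [one_mul, ← mul_div_assoc, mul_sub, mul_one, hBconj]
    have hphi : phiN α (n+1) 1 = ((rhoV α n : ℝ) : ℂ)⁻¹ * (S * (B - (starRingEnd ℂ) (α n))) := by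
      show (szego α (n+1) 1).1 = _
      simp only [szego]
      rw [show (szego α n 1).2 = S from rfl, show (szego α n 1).1 = phiN α n 1 from rfl, hP]
      ring
    constructor
    · rw [hstar]
      exact mul_ne_zero (inv_ne_zero hρc) (mul_ne_zero hS hne)
    · rw [hstar, hphi, hBsucc]
      rw [div_mul_eq_mul_div, eq_div_iff hne]
      ring

/- product formula -/
lemma abs_phiN_inv_sq {α : ℕ → ℂ} (n : ℕ) (h : ∀ k < n, ‖α k‖ < 1) :
    (‖phiN α n 1‖)⁻¹ ^ 2 = ∏ i ∈ Finset.range n, poissonD (gammaV α i) := by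
  induction n with
  | zero => simp [phiN, szego]
  | succ n ih =>
    have h1 : ∀ k < n, ‖α k‖ < 1 := fun k hk => h k (Nat.lt_succ_of_lt hk)
    have ihn := ih h1
    obtain ⟨hS, hP⟩ := phi_star_ratio n h1
    have hα := h n (Nat.lt_succ_self n)
    have hB1 := abs_BV_one n h1
    have hne := BV_one_sub_ne hB1 hα
    have hρ : (0:ℝ) < rhoV α n := by
      apply Real.sqrt_pos.2
      nlinarith [norm_nonneg (α n), sq_nonneg (‖α n‖)]
    -- abs phiN = abs phiNStar
    have habsPS : ∀ m, (∀ k < m, ‖α k‖ < 1) →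
        ‖phiN α m 1‖ = ‖phiNStar α m 1‖ := by
      intro m hm
      obtain ⟨hS', hP'⟩ := phi_star_ratio m hm
      rw [hP', norm_mul, abs_BV_one m hm, one_mul]
    have hphi_succ : ‖phiN α (n+1) 1‖ =
        (rhoV α n)⁻¹ * (‖phiNStar α n 1‖ * ‖1 - α n * BV α n 1‖) := by
      rw [habsPS (n+1) h]
      have hstar : phiNStar α (n+1) 1 =
          ((rhoV α n : ℝ) : ℂ)⁻¹ * (phiNStar α n 1 * (1 - α n * BV α n 1)) := by
        show (szego α (n+1) 1).2 = _
        simp only [szego]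
        rw [show (szego α n 1).2 = phiNStar α n 1 from rfl,
            show (szego α n 1).1 = phiN α n 1 from rfl, hP]
        ring
      rw [hstar, norm_mul, norm_mul, norm_inv, Complex.norm_real, Real.norm_eq_abs,
        abs_of_pos hρ]
    have hγ : gammaV α n = α n * BV α n 1 := rfl
    have hγabs : ‖gammaV α n‖ = ‖α n‖ := by
      rw [hγ, norm_mul, hB1, mul_one]
    have hone_sub : ‖1 - gammaV α n‖ ≠ 0 := by
      rw [hγ]; exact fun hc => hne (norm_eq_zero.1 hc)
    have hpois : poissonD (gammaV α n) =
        (rhoV α n)^2 / ‖1 - α n * BV α n 1‖ ^ 2 := by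
      unfold poissonD
      rw [hγabs, ← hγ]
      congr 1
      rw [rhoV, Real.sq_sqrt]
      nlinarith [norm_nonneg (α n)]
    rw [Finset.prod_range_succ, ← ihn, habsPS n h1] at *
    rw [hphi_succ, hpois]
    have hSne : ‖phiNStar α n 1‖ ≠ 0 := norm_ne_zero_iff.mpr hS
    field_simp

/- measurability -/
lemma measurable_szego (n : ℕ) (z : ℂ) : Measurable (fun α : ℕ → ℂ => szego α n z) := by
  induction n with
  | zero => exact measurable_const
  | succ n ih =>
    have h1 : Measurable fun α : ℕ → ℂ => (szego α n z).1 := ih.fst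
    have h2 : Measurable fun α : ℕ → ℂ => (szego α n z).2 := ih.snd
    have hρ : Measurable fun α : ℕ → ℂ => (((rhoV α n : ℝ)):ℂ)⁻¹ := by
      apply Measurable.inv
      exact Complex.measurable_ofReal.comp
        ((Real.continuous_sqrt.measurable).comp
          ((measurable_const.sub (((continuous_norm.measurable).comp
            (measurable_pi_apply n)).pow measurable_const))))
    have hα : Measurable fun α : ℕ → ℂ => α n := measurable_pi_apply n
    exact (hρ.mul ((measurable_const.mul h1).sub
        (((Complex.continuous_conj.measurable).comp hα).mul h2))).prodMk
      (hρ.mul (h2.sub ((hα.mul measurable_const).mul h1)))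

lemma measurable_BV (n : ℕ) (z : ℂ) : Measurable (fun α : ℕ → ℂ => BV α n z) := by
  induction n with
  | zero => exact measurable_const
  | succ n ih =>
    have hα : Measurable fun α : ℕ → ℂ => α n := measurable_pi_apply n
    exact (measurable_const.mul ih).mul
      (((measurable_const.sub ((Complex.continuous_conj.measurable).comp (hα.mul ih)))).div
        (measurable_const.sub (hα.mul ih)))

lemma measurable_gammaV (k : ℕ) : Measurable (fun α : ℕ → ℂ => gammaV α k) :=
  (measurable_pi_apply k).mul (measurable_BV k 1)

/- finite versions -/
noncomputable def extFin (n : ℕ) (x : Fin n → ℂ) : ℕ → ℂ :=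
  fun k => if h : k < n then x ⟨k, h⟩ else 0

lemma measurable_extFin (n : ℕ) : Measurable (extFin n) := by
  apply measurable_pi_lambda
  intro k
  by_cases h : k < n
  · simpa [extFin, h] using measurable_pi_apply (⟨k, h⟩ : Fin n)
  · simp only [extFin, h]
    exact measurable_const

noncomputable def gfin (n : ℕ) (x : Fin n → ℂ) : Fin n → ℂ :=
  fun i => gammaV (extFin n x) i

lemma measurable_gfin (n : ℕ) : Measurable (gfin n) :=
  measurable_pi_lambda _ fun i => (measurable_gammaV i).comp (measurable_extFin n)

noncomputable def Bfin (n : ℕ) (x : Fin n → ℂ) : ℂ := BV (extFin n x) n 1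

lemma measurable_Bfin (n : ℕ) : Measurable (Bfin n) :=
  (measurable_BV n 1).comp (measurable_extFin n)

lemma gammaV_eq_gfin (n : ℕ) (α : ℕ → ℂ) (i : Fin n) :
    gammaV α i = gfin n (fun j : Fin n => α j) i := by
  apply gammaV_congr
  intro j hj
  have hjn : j < n := lt_of_lt_of_le hj i.2
  simp [extFin, hjn]

open MeasureTheory ProbabilityTheory Filter

section Prob

variable (Q : Measure (ℕ → ℂ)) [IsProbabilityMeasure Q]

lemma measurable_proj (n : ℕ) : Measurable (fun α : ℕ → ℂ => fun i : Fin n => α i) :=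
  measurable_pi_lambda _ fun i => measurable_pi_apply _

instance lamProb (k : ℕ) : IsProbabilityMeasure (Q.map (fun α => α k)) :=
  Measure.isProbabilityMeasure_map (measurable_pi_apply k).aemeasurable

lemma map_restrict_eq_pi
    (hindep : iIndepFun (fun k (α : ℕ → ℂ) => α k) Q) (n : ℕ) :
    Q.map (fun α => fun i : Fin n => α i) =
      Measure.pi (fun i : Fin n => Q.map (fun α => α (i : ℕ))) := by
  refine (Measure.pi_eq fun s hs => ?_).symm
  classical
  set sets : ℕ → Set ℂ := fun k => if h : k < n then s ⟨k, h⟩ else Set.univ with hsets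
  have hsm : ∀ k, MeasurableSet (sets k) := by
    intro k
    by_cases h : k < n
    · simpa [hsets, h] using hs ⟨k, h⟩
    · simp [hsets, h]
  have hpre : (fun α : ℕ → ℂ => fun i : Fin n => α i) ⁻¹' (Set.pi Set.univ s) =
      ⋂ k ∈ Finset.range n, (fun α : ℕ → ℂ => α k) ⁻¹' sets k := by
    ext α
    simp only [Set.mem_preimage, Set.mem_pi, Set.mem_univ, forall_true_left,
      Set.mem_iInter, Finset.mem_range]
    constructor
    · intro h k hk
      simpa [hsets, hk] using h ⟨k, hk⟩
    · intro h i
      simpa [hsets, i.2] using h i i.2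
  rw [Measure.map_apply (measurable_proj n) (MeasurableSet.univ_pi hs), hpre,
    hindep.measure_inter_preimage_eq_mul (Finset.range n) (fun k _ => hsm k)]
  calc ∏ k ∈ Finset.range n, Q ((fun α : ℕ → ℂ => α k) ⁻¹' sets k)
      = ∏ k ∈ Finset.range n, (Q.map (fun α : ℕ → ℂ => α k)) (sets k) := by
        refine Finset.prod_congr rfl fun k _ => ?_
        rw [Measure.map_apply (measurable_pi_apply k) (hsm k)]
    _ = ∏ i : Fin n, (Q.map (fun α : ℕ → ℂ => α (i : ℕ))) (sets (i : ℕ)) :=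
        (Fin.prod_univ_eq_prod_range (fun k => (Q.map (fun α : ℕ → ℂ => α k)) (sets k)) n).symm
    _ = ∏ i : Fin n, (Q.map (fun α : ℕ → ℂ => α (i : ℕ))) (s i) := by
        refine Finset.prod_congr rfl fun i _ => ?_
        congr 1
        simp [hsets, i.2]

lemma rotation_invariance
    (hrot : ∀ k (t : ℝ),
      (Q.map (fun α => α k)).map (fun z => Complex.exp (t * Complex.I) * z) =
        Q.map (fun α => α k))
    (k : ℕ) {c : ℂ} (hc : ‖c‖ = 1) {s : Set ℂ} (hs : MeasurableSet s) :
    Q.map (fun α => α k) ((fun x => c * x) ⁻¹' s) = Q.map (fun α => α k) s := by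
  have hce : Complex.exp ((Complex.arg c : ℝ) * Complex.I) = c := by
    have := Complex.norm_mul_exp_arg_mul_I c
    rwa [hc, Complex.ofReal_one, one_mul] at this
  conv_rhs => rw [← hrot k (Complex.arg c)]
  rw [Measure.map_apply (measurable_const_mul _) hs, hce]

lemma lam_disk (hdisk : ∀ᵐ α ∂Q, ∀ k, ‖α k‖ < 1) (k : ℕ) :
    ∀ᵐ z ∂(Q.map (fun α => α k)), ‖z‖ < 1 := by
  rw [ae_iff, Measure.map_apply (measurable_pi_apply k)]
  · rw [ae_iff] at hdisk
    refine measure_mono_null ?_ hdisk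
    intro α hα
    simp only [Set.mem_setOf_eq] at *
    exact fun h => hα (h k)
  · exact (measurableSet_lt continuous_norm.measurable measurable_const).compl

end Prob

section Prob2

variable (Q : Measure (ℕ → ℂ)) [IsProbabilityMeasure Q]

lemma gfin_zero : gfin 0 = id := by
  funext x i
  exact i.elim0

lemma gfin_last (n : ℕ) (w : Fin (n + 1) → ℂ) :
    gfin (n + 1) w (Fin.last n) =
      w (Fin.last n) * Bfin n (fun j => w ((Fin.last n).succAbove j)) := by
  show gammaV (extFin (n+1) w) ((Fin.last n) : ℕ) = _
  unfold gammaV Bfin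
  have h1 : extFin (n+1) w ((Fin.last n) : ℕ) = w (Fin.last n) := by
    simp only [extFin, Fin.val_last, Nat.lt_succ_self, dif_pos]
    exact congrArg w (Fin.ext rfl)
  have h2 : BV (extFin (n+1) w) ((Fin.last n) : ℕ) 1 =
      BV (extFin n (fun j => w ((Fin.last n).succAbove j))) n 1 := by
    rw [Fin.val_last]
    apply BV_congr
    intro k hk
    simp only [extFin, hk, Nat.lt_succ_of_lt hk, dif_pos]
    congr 1
    rw [Fin.succAbove_last]
    exact Fin.ext rfl
  rw [Fin.val_last] at h1 h2 ⊢
  rw [h1, h2]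

lemma gfin_castSucc (n : ℕ) (w : Fin (n + 1) → ℂ) (j : Fin n) :
    gfin (n + 1) w ((Fin.last n).succAbove j) =
      gfin n (fun j' => w ((Fin.last n).succAbove j')) j := by
  show gammaV (extFin (n+1) w) (((Fin.last n).succAbove j : Fin (n+1)) : ℕ) = gammaV _ (j : ℕ)
  have hco : (((Fin.last n).succAbove j : Fin (n+1)) : ℕ) = (j : ℕ) := by
    rw [Fin.succAbove_last]; rfl
  rw [hco]
  apply gammaV_congr
  intro k hk
  have hkn : k < n := Nat.lt_of_lt_of_le hk j.2
  simp only [extFin, hkn, Nat.lt_succ_of_lt hkn, dif_pos]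
  congr 1
  rw [Fin.succAbove_last]
  exact Fin.ext rfl

lemma map_gfin_pi
    (hdisk : ∀ᵐ α ∂Q, ∀ k, ‖α k‖ < 1)
    (hrot : ∀ k (t : ℝ),
      (Q.map (fun α => α k)).map (fun z => Complex.exp (t * Complex.I) * z) =
        Q.map (fun α => α k)) :
    ∀ n, (Measure.pi (fun i : Fin n => Q.map (fun α => α (i : ℕ)))).map (gfin n) =
      Measure.pi (fun i : Fin n => Q.map (fun α => α (i : ℕ))) := by
  intro n
  induction n with
  | zero => rw [gfin_zero, Measure.map_id]
  | succ n ih =>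
    set Λ : ℕ → Measure ℂ := fun k => Q.map (fun α => α k) with hΛ
    set ν : Measure (Fin n → ℂ) := Measure.pi (fun j : Fin n => Λ (j : ℕ)) with hν
    set e := MeasurableEquiv.piFinSuccAbove (fun _ : Fin (n+1) => ℂ) (Fin.last n) with he
    have hfam : (fun j : Fin n => Λ (((Fin.last n).succAbove j : Fin (n+1)) : ℕ)) =
        fun j : Fin n => Λ (j : ℕ) := by
      funext j
      congr 1
      rw [Fin.succAbove_last]
      rfl
    have hmp : MeasurePreserving e
        (Measure.pi (fun i : Fin (n+1) => Λ (i : ℕ)))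
        ((Λ n).prod ν) := by
      have h := measurePreserving_piFinSuccAbove (fun i : Fin (n+1) => Λ (i : ℕ)) (Fin.last n)
      rw [hfam] at h
      rw [show ((Fin.last n : Fin (n+1)) : ℕ) = n from Fin.val_last n] at h
      exact h
    -- the product-space version of gfin (n+1)
    set F : ℂ × (Fin n → ℂ) → ℂ × (Fin n → ℂ) :=
      fun p => (p.1 * Bfin n p.2, gfin n p.2) with hF
    have hFm : Measurable F :=
      ((measurable_fst.mul ((measurable_Bfin n).comp measurable_snd))).prodMk
        ((measurable_gfin n).comp measurable_snd)
    have hcomp : (e : (Fin (n+1) → ℂ) → ℂ × (Fin n → ℂ)) ∘ gfin (n+1) = F ∘ e := by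
      funext w
      have h1 : (e (gfin (n+1) w)).1 = gfin (n+1) w (Fin.last n) := rfl
      have h2 : (e (gfin (n+1) w)).2 = fun j => gfin (n+1) w ((Fin.last n).succAbove j) := rfl
      have h3 : (e w).1 = w (Fin.last n) := rfl
      have h4 : (e w).2 = fun j => w ((Fin.last n).succAbove j) := rfl
      show e (gfin (n+1) w) = F (e w)
      apply Prod.ext
      · rw [h1, hF]
        show gfin (n+1) w (Fin.last n) = (e w).1 * Bfin n (e w).2
        rw [h3, h4, gfin_last]
      · rw [h2, hF]
        show (fun j => gfin (n+1) w ((Fin.last n).succAbove j)) = gfin n (e w).2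
        rw [h4]
        funext j
        rw [gfin_castSucc]
    -- a.e. unimodularity of Bfin
    have hν_disk : ∀ᵐ y ∂ν, ∀ j : Fin n, ‖y j‖ < 1 := by
      rw [ae_all_iff]
      intro j
      have hd := lam_disk Q hdisk (j : ℕ)
      rw [ae_iff] at hd ⊢
      have hset : {y : Fin n → ℂ | ¬ ‖y j‖ < 1} =
          Function.eval j ⁻¹' {z : ℂ | ¬ ‖z‖ < 1} := rfl
      rw [hset]
      exact Measure.pi_eval_preimage_null _ hd
    have hBy : ∀ᵐ y ∂ν, ‖Bfin n y‖ = 1 := by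
      refine hν_disk.mono fun y hy => ?_
      apply abs_BV_one
      intro k hk
      simpa [extFin, hk] using hy ⟨k, hk⟩
    -- the key product computation
    have hC : ((Λ n).prod ν).map F = (Λ n).prod ν := by
      refine (Measure.prod_eq fun s t hs ht => ?_).symm
      rw [Measure.map_apply hFm (hs.prod ht),
        Measure.prod_apply_symm (hFm (hs.prod ht))]
      have hae : ∀ᵐ y ∂ν,
          (Λ n) ((fun x => (x, y)) ⁻¹' (F ⁻¹' (s ×ˢ t))) =
          Set.indicator (gfin n ⁻¹' t) (fun _ => (Λ n) s) y := by
        refine hBy.mono fun y hy => ?_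
        have hsl : (fun x => (x, y)) ⁻¹' (F ⁻¹' (s ×ˢ t)) =
            {x : ℂ | x * Bfin n y ∈ s ∧ gfin n y ∈ t} := rfl
        by_cases hgt : gfin n y ∈ t
        · rw [hsl, Set.indicator_of_mem (show y ∈ gfin n ⁻¹' t from hgt)]
          have : {x : ℂ | x * Bfin n y ∈ s ∧ gfin n y ∈ t} =
              (fun x => Bfin n y * x) ⁻¹' s := by
            ext x
            simp [hgt, mul_comm]
          rw [this]
          exact rotation_invariance Q hrot n hy hs
        · rw [hsl, Set.indicator_of_notMem (show y ∉ gfin n ⁻¹' t from hgt)]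
          have : {x : ℂ | x * Bfin n y ∈ s ∧ gfin n y ∈ t} = ∅ := by
            ext x; simp [hgt]
          simp [this]
      rw [lintegral_congr_ae hae,
        lintegral_indicator ((measurable_gfin n) ht),
        setLIntegral_const]
      have hmt : ν (gfin n ⁻¹' t) = ν t := by
        conv_rhs => rw [← ih]
        rw [Measure.map_apply (measurable_gfin n) ht]
      rw [hmt, mul_comm]
    -- assemble
    have hgm : Measurable (gfin (n+1)) := measurable_gfin (n+1)
    calc (Measure.pi (fun i : Fin (n+1) => Λ (i : ℕ))).map (gfin (n+1))
        = (((Measure.pi (fun i : Fin (n+1) => Λ (i : ℕ))).map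
            ((e : (Fin (n+1) → ℂ) → ℂ × (Fin n → ℂ)) ∘ gfin (n+1))).map e.symm) := by
          rw [Measure.map_map e.symm.measurable (e.measurable.comp hgm)]
          congr 1
          funext w
          simp
      _ = ((((Λ n).prod ν)).map F).map e.symm := by
          rw [hcomp, ← Measure.map_map hFm e.measurable, hmp.map_eq]
      _ = (((Λ n).prod ν)).map e.symm := by rw [hC]
      _ = Measure.pi (fun i : Fin (n+1) => Λ (i : ℕ)) := by
          rw [hmp.symm e |>.map_eq]

end Prob2

section Prob3

variable (Q : Measure (ℕ → ℂ)) [IsProbabilityMeasure Q]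

lemma map_gammaVec
    (hdisk : ∀ᵐ α ∂Q, ∀ k, ‖α k‖ < 1)
    (hindep : iIndepFun (fun k (α : ℕ → ℂ) => α k) Q)
    (hrot : ∀ k (t : ℝ),
      (Q.map (fun α => α k)).map (fun z => Complex.exp (t * Complex.I) * z) =
        Q.map (fun α => α k)) (n : ℕ) :
    Q.map (fun α => fun i : Fin n => gammaV α i) =
      Measure.pi (fun i : Fin n => Q.map (fun α => α (i : ℕ))) := by
  have hfun : (fun α : ℕ → ℂ => fun i : Fin n => gammaV α i) =
      gfin n ∘ (fun α : ℕ → ℂ => fun i : Fin n => α i) := by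
    funext α
    funext i
    exact gammaV_eq_gfin n α i
  rw [hfun, ← Measure.map_map (measurable_gfin n) (measurable_proj n),
    map_restrict_eq_pi Q hindep n, map_gfin_pi Q hdisk hrot n]

lemma lintegral_pi_prod :
    ∀ (n : ℕ) (μ : Fin n → Measure ℂ), (∀ i, IsProbabilityMeasure (μ i)) →
      ∀ (h : Fin n → ℂ → ENNReal), (∀ i, Measurable (h i)) →
        ∫⁻ y, ∏ i, h i (y i) ∂Measure.pi μ = ∏ i, ∫⁻ x, h i x ∂μ i := by
  intro n
  induction n with
  | zero =>
    intro μ _ h _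
    simp [Measure.pi_of_empty, lintegral_dirac]
  | succ n ih =>
    intro μ hμ h hm
    haveI := hμ
    set e := MeasurableEquiv.piFinSuccAbove (fun _ : Fin (n+1) => ℂ) (Fin.last n) with he
    have mp := measurePreserving_piFinSuccAbove μ (Fin.last n)
    have hGm : Measurable (fun y : Fin (n+1) → ℂ => ∏ i, h i (y i)) :=
      Finset.measurable_prod Finset.univ fun i _ => (hm i).comp (measurable_pi_apply i)
    have key := (mp.symm e).lintegral_comp hGm
    rw [← key]
    have hint : ∀ p : ℂ × (Fin n → ℂ),
        (∏ i, h i ((e.symm p) i)) =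
          h (Fin.last n) p.1 *
            ∏ j : Fin n, h ((Fin.last n).succAbove j) (p.2 j) := by
      rintro ⟨x, y⟩
      rw [Fin.prod_univ_succAbove (fun i => h i ((e.symm (x, y)) i)) (Fin.last n)]
      congr 1
      · congr 1
        simp [he, MeasurableEquiv.piFinSuccAbove, Fin.insertNth_apply_same]
      · apply Finset.prod_congr rfl
        intro j _
        congr 1
        simp [he, MeasurableEquiv.piFinSuccAbove, Fin.insertNth_apply_succAbove]
    calc ∫⁻ p, (∏ i, h i ((e.symm p) i))
          ∂((μ (Fin.last n)).prod (Measure.pi fun j => μ ((Fin.last n).succAbove j)))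
        = ∫⁻ p, h (Fin.last n) p.1 *
            (∏ j : Fin n, h ((Fin.last n).succAbove j) (p.2 j))
          ∂((μ (Fin.last n)).prod (Measure.pi fun j => μ ((Fin.last n).succAbove j))) := by
          apply lintegral_congr
          intro p
          exact hint p
      _ = (∫⁻ x, h (Fin.last n) x ∂μ (Fin.last n)) *
            ∫⁻ y, (∏ j : Fin n, h ((Fin.last n).succAbove j) (y j))
              ∂(Measure.pi fun j => μ ((Fin.last n).succAbove j)) := by
          exact lintegral_prod_mul (μ := μ (Fin.last n))
            (ν := Measure.pi fun j => μ ((Fin.last n).succAbove j))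
            (f := h (Fin.last n))
            (g := fun y => ∏ j : Fin n, h ((Fin.last n).succAbove j) (y j))
            (hm _).aemeasurable
            ((Finset.measurable_prod Finset.univ fun j _ =>
              (hm _).comp (measurable_pi_apply j)).aemeasurable)
      _ = (∫⁻ x, h (Fin.last n) x ∂μ (Fin.last n)) *
            ∏ j : Fin n, ∫⁻ x, h ((Fin.last n).succAbove j) x ∂μ ((Fin.last n).succAbove j) := by
          rw [ih (fun j => μ ((Fin.last n).succAbove j)) (fun j => inferInstance)
            (fun j => h ((Fin.last n).succAbove j)) (fun j => hm _)]
      _ = ∏ i, ∫⁻ x, h i x ∂μ i := by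
          rw [Fin.prod_univ_succAbove (fun i => ∫⁻ x, h i x ∂μ i) (Fin.last n)]

end Prob3

section Prob4

lemma measurable_poissonD : Measurable poissonD := by
  unfold poissonD
  exact (measurable_const.sub
      ((continuous_norm.measurable).pow measurable_const)).div
    (((continuous_norm.measurable).comp
      (measurable_const.sub measurable_id)).pow measurable_const)

lemma poissonD_nonneg {z : ℂ} (hz : ‖z‖ < 1) : 0 ≤ poissonD z := by
  unfold poissonD
  apply div_nonneg
  · nlinarith [norm_nonneg z]
  · positivity

lemma indicator_pi_prod (n : ℕ) (s : Fin n → Set ℂ) (d : ℂ → ENNReal) (y : Fin n → ℂ) :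
    Set.indicator (Set.pi Set.univ s) (fun y' => ∏ i, d (y' i)) y =
      ∏ i, Set.indicator (s i) d (y i) := by
  by_cases hy : y ∈ Set.pi Set.univ s
  · rw [Set.indicator_of_mem hy]
    refine Finset.prod_congr rfl fun i _ => ?_
    rw [Set.indicator_of_mem (hy i (Set.mem_univ i))]
  · rw [Set.indicator_of_notMem hy]
    rw [Set.mem_pi] at hy
    push_neg at hy
    obtain ⟨i, _, hi⟩ := hy
    exact (Finset.prod_eq_zero (Finset.mem_univ i) (Set.indicator_of_notMem hi d)).symm

variable (Q : Measure (ℕ → ℂ)) [IsProbabilityMeasure Q]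

lemma measurable_gammaVec (n : ℕ) :
    Measurable (fun α : ℕ → ℂ => fun i : Fin n => gammaV α (i : ℕ)) :=
  measurable_pi_lambda _ fun i => measurable_gammaV i

lemma step_B
    (hdisk : ∀ᵐ α ∂Q, ∀ k, ‖α k‖ < 1)
    (hindep : iIndepFun (fun k (α : ℕ → ℂ) => α k) Q)
    (hrot : ∀ k (t : ℝ),
      (Q.map (fun α => α k)).map (fun z => Complex.exp (t * Complex.I) * z) =
        Q.map (fun α => α k))
    (Q0 : Measure (ℕ → ℂ)) [IsProbabilityMeasure Q0]
    (hQ0 : ∀ n : ℕ, ∀ f : (Fin (n + 1) → ℂ) → ℝ, Measurable f →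
      (∃ C : ℝ, ∀ x, |f x| ≤ C) →
        ∫ α, f (fun i => α i) ∂Q0 =
          ∫ α, f (fun i => α i) * (‖phiN α (n + 1) 1‖)⁻¹ ^ 2 ∂Q)
    (n : ℕ) (s : Fin (n + 1) → Set ℂ) (hs : ∀ i, MeasurableSet (s i)) :
    Q0 ((fun α => fun i : Fin (n + 1) => gammaV α (i : ℕ)) ⁻¹' Set.pi Set.univ s) =
      ∏ i, ∫⁻ z in s i, ENNReal.ofReal (poissonD z) ∂(Q.map (fun α => α (i : ℕ))) := by
  classical
  set T : Set (Fin (n + 1) → ℂ) := gfin (n + 1) ⁻¹' Set.pi Set.univ s with hT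
  have hTm : MeasurableSet T := (measurable_gfin (n + 1)) (MeasurableSet.univ_pi hs)
  set f : (Fin (n + 1) → ℂ) → ℝ := Set.indicator T (fun _ => 1) with hf
  have hfm : Measurable f := measurable_const.indicator hTm
  have hfb : ∀ x, |f x| ≤ 1 := by
    intro x
    by_cases h : x ∈ T <;>
      simp [hf, Set.indicator_of_mem, Set.indicator_of_notMem, h]
  set E : Set (ℕ → ℂ) :=
    (fun α => fun i : Fin (n + 1) => gammaV α (i : ℕ)) ⁻¹' Set.pi Set.univ s with hE
  have hEm : MeasurableSet E :=
    (measurable_gammaVec (n + 1)) (MeasurableSet.univ_pi hs)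
  have hmem : ∀ α : ℕ → ℂ, ((fun j : Fin (n + 1) => α j) ∈ T) ↔ α ∈ E := by
    intro α
    have hg : gfin (n + 1) (fun j : Fin (n + 1) => α j) =
        fun i : Fin (n + 1) => gammaV α (i : ℕ) := by
      funext i
      exact (gammaV_eq_gfin (n + 1) α i).symm
    rw [hT, hE, Set.mem_preimage, Set.mem_preimage, hg]
  have hEvent : (fun α : ℕ → ℂ => f (fun i : Fin (n + 1) => α i)) =
      Set.indicator E (fun _ => (1 : ℝ)) := by
    funext α
    simp only [hf, Set.indicator_apply]
    exact if_congr (hmem α) rfl rfl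
  have key := hQ0 n f hfm ⟨1, hfb⟩
  set w : (ℕ → ℂ) → ℝ := fun α => (‖phiN α (n + 1) 1‖)⁻¹ ^ 2 with hw
  have hwm : Measurable w := by
    have h1 : Measurable fun α : ℕ → ℂ => (‖phiN α (n + 1) 1‖)⁻¹ :=
      (continuous_norm.measurable.comp ((measurable_szego (n + 1) 1).fst)).inv
    exact h1.pow_const 2
  have hw0 : ∀ α, 0 ≤ w α := fun α => by positivity
  have hw1 : ∫ α, w α ∂Q = 1 := by
    have h1 := hQ0 n (fun _ => (1 : ℝ)) measurable_const ⟨1, fun x => by norm_num⟩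
    simp only [one_mul] at h1
    rw [← h1]
    simp
  have hwInt : Integrable w Q := by
    by_contra hcon
    rw [integral_undef hcon] at hw1
    exact zero_ne_one hw1
  have hgInt : Integrable (fun α => f (fun i : Fin (n + 1) => α i) * w α) Q := by
    refine hwInt.mono' ?_ ?_
    · exact ((hfm.comp (measurable_proj (n + 1))).mul hwm).aestronglyMeasurable
    · refine Filter.Eventually.of_forall fun α => ?_
      rw [Real.norm_eq_abs, abs_mul, _root_.abs_of_nonneg (hw0 α)]
      exact mul_le_of_le_one_left (hw0 α) (hfb _)
  have hQ0E : Q0 E = ENNReal.ofReal (∫ α, f (fun i : Fin (n + 1) => α i) ∂Q0) := by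
    rw [hEvent, integral_indicator_const (1 : ℝ) hEm]
    rw [smul_eq_mul, mul_one, measureReal_def, ENNReal.ofReal_toReal (measure_ne_top _ _)]
  rw [hQ0E, key,
    MeasureTheory.ofReal_integral_eq_lintegral_ofReal hgInt
      (Filter.Eventually.of_forall fun α => by
        by_cases h : (fun j : Fin (n + 1) => α j) ∈ T
        · simp only [hf, Set.indicator_of_mem h, one_mul]
          exact hw0 α
        · simp [hf, Set.indicator_of_notMem h])]
  set H : (Fin (n + 1) → ℂ) → ENNReal :=
    Set.indicator (Set.pi Set.univ s)
      (fun y => ∏ i, ENNReal.ofReal (poissonD (y i))) with hH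
  have hHm : Measurable H := by
    apply Measurable.indicator _ (MeasurableSet.univ_pi hs)
    exact Finset.measurable_prod Finset.univ fun i _ =>
      (ENNReal.measurable_ofReal.comp measurable_poissonD).comp (measurable_pi_apply i)
  have hae : ∀ᵐ α ∂Q,
      ENNReal.ofReal (f (fun i : Fin (n + 1) => α i) * w α) =
        H (fun i : Fin (n + 1) => gammaV α (i : ℕ)) := by
    refine hdisk.mono fun α hα => ?_
    have hdall : ∀ k < n + 1, ‖α k‖ < 1 := fun k _ => hα k
    have hwprod : w α = ∏ k ∈ Finset.range (n + 1), poissonD (gammaV α k) :=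
      abs_phiN_inv_sq (n + 1) hdall
    by_cases h : α ∈ E
    · have hT' : (fun j : Fin (n + 1) => α j) ∈ T := (hmem α).2 h
      have hbox : (fun i : Fin (n + 1) => gammaV α (i : ℕ)) ∈ Set.pi Set.univ s := h
      rw [hf, Set.indicator_of_mem hT', one_mul, hH, Set.indicator_of_mem hbox, hwprod]
      rw [← Fin.prod_univ_eq_prod_range (fun k => poissonD (gammaV α k)) (n + 1)]
      rw [← ENNReal.ofReal_prod_of_nonneg]
      intro i _
      apply poissonD_nonneg
      exact abs_gammaV_lt (i : ℕ) (fun j hj => hα j)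
    · have hT' : (fun j : Fin (n + 1) => α j) ∉ T := fun hc => h ((hmem α).1 hc)
      have hbox : (fun i : Fin (n + 1) => gammaV α (i : ℕ)) ∉ Set.pi Set.univ s := h
      rw [hf, Set.indicator_of_notMem hT', zero_mul, hH, Set.indicator_of_notMem hbox]
      simp
  rw [lintegral_congr_ae hae, ← lintegral_map hHm (measurable_gammaVec (n + 1)),
    map_gammaVec Q hdisk hindep hrot (n + 1)]
  have hHprod : ∀ y : Fin (n + 1) → ℂ,
      H y = ∏ i, Set.indicator (s i) (fun z => ENNReal.ofReal (poissonD z)) (y i) :=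
    fun y => by rw [hH]; exact indicator_pi_prod (n + 1) s (fun z => ENNReal.ofReal (poissonD z)) y
  rw [lintegral_congr hHprod,
    lintegral_pi_prod (n + 1) _ (fun i => inferInstance)
      (fun i => Set.indicator (s i) (fun z => ENNReal.ofReal (poissonD z)))
      (fun i => (ENNReal.measurable_ofReal.comp measurable_poissonD).indicator (hs i))]
  refine Finset.prod_congr rfl fun i _ => ?_
  rw [lintegral_indicator (hs i)]

end Prob4


/-- If `Q_0` satisfies
`∫ f(α_0,…,α_n) dQ_0 = E_Q[f(α_0,…,α_n) |φ_{n+1}(1)|⁻²]` for all bounded Borel `f`, then the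
pushforward of `Q_0` under `α ↦ (γ_k)` is the product of the size-biased laws
`P_𝔻(z,1) Λ_k(dz)` (where `Λ_k` is the law of `α_k` under `Q`): the finite-dimensional
laws are product measures, the `γ_k` are mutually independent under `Q_0`, and
`Q_0(γ_k ∈ dz) = P_𝔻(z,1) Q(γ_k ∈ dz)`. -/
theorem size_biased_verblunsky
    (Q : Measure (ℕ → ℂ)) [IsProbabilityMeasure Q]
    (hdisk : ∀ᵐ α ∂Q, ∀ k, ‖α k‖ < 1)
    (hindep : iIndepFun (fun k (α : ℕ → ℂ) => α k) Q)
    (hrot : ∀ k (t : ℝ),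
      (Q.map (fun α => α k)).map (fun z => Complex.exp (t * Complex.I) * z) =
        Q.map (fun α => α k))
    (Q0 : Measure (ℕ → ℂ)) [IsProbabilityMeasure Q0]
    (hQ0 : ∀ n : ℕ, ∀ f : (Fin (n + 1) → ℂ) → ℝ, Measurable f →
      (∃ C : ℝ, ∀ x, |f x| ≤ C) →
        ∫ α, f (fun i => α i) ∂Q0 =
          ∫ α, f (fun i => α i) * (‖phiN α (n + 1) 1‖)⁻¹ ^ 2 ∂Q) :
    (∀ n : ℕ,
      Q0.map (fun α => fun i : Fin n => gammaV α i) =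
        Measure.pi (fun i : Fin n =>
          (Q.map (fun α => α (i : ℕ))).withDensity
            (fun z => ENNReal.ofReal (poissonD z)))) ∧
    iIndepFun (fun k (α : ℕ → ℂ) => gammaV α k) Q0 ∧
    (∀ k : ℕ,
      Q0.map (fun α => gammaV α k) =
        (Q.map (fun α => gammaV α k)).withDensity
          (fun z => ENNReal.ofReal (poissonD z))) := by
  classical
  set Λ : ℕ → Measure ℂ := fun k => Q.map (fun α => α k) with hΛ
  set dens : ℂ → ENNReal := fun z => ENNReal.ofReal (poissonD z) with hdens
  set Λ' : ℕ → Measure ℂ := fun k => (Λ k).withDensity dens with hΛ'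
  -- boxes under Q0
  have hQ0box : ∀ (n : ℕ) (s : Fin (n + 1) → Set ℂ), (∀ i, MeasurableSet (s i)) →
      Q0 ((fun α => fun i : Fin (n + 1) => gammaV α (i : ℕ)) ⁻¹' Set.pi Set.univ s) =
        ∏ i : Fin (n + 1), Λ' (i : ℕ) (s i) := by
    intro n s hs
    rw [step_B Q hdisk hindep hrot Q0 hQ0 n s hs]
    exact Finset.prod_congr rfl fun i _ => (withDensity_apply _ (hs i)).symm
  -- each Λ' k is a probability measure
  have hc : ∀ k, Λ' k Set.univ = 1 := by
    intro k
    induction k using Nat.strong_induction_on with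
    | _ k ih =>
      have hB := hQ0box k (fun _ => Set.univ) (fun _ => MeasurableSet.univ)
      rw [Set.pi_univ, Set.preimage_univ, measure_univ] at hB
      rw [Fin.prod_univ_castSucc] at hB
      have hones : ∀ i : Fin k, Λ' ((Fin.castSucc i : Fin (k + 1)) : ℕ) Set.univ = 1 := by
        intro i
        have : ((Fin.castSucc i : Fin (k + 1)) : ℕ) = (i : ℕ) := rfl
        rw [this]
        exact ih (i : ℕ) i.2
      rw [Finset.prod_congr rfl (fun i _ => hones i), Finset.prod_const_one, one_mul,
        Fin.val_last] at hB
      exact hB.symm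
  haveI hprob : ∀ k, IsProbabilityMeasure (Λ' k) := fun k => ⟨hc k⟩
  -- Part 1
  have hpart1 : ∀ n, Q0.map (fun α => fun i : Fin n => gammaV α (i : ℕ)) =
      Measure.pi (fun i : Fin n => Λ' (i : ℕ)) := by
    intro n
    refine (Measure.pi_eq fun s hs => ?_).symm
    rw [Measure.map_apply (measurable_gammaVec n) (MeasurableSet.univ_pi hs)]
    cases n with
    | zero =>
      have hset : Set.pi (Set.univ : Set (Fin 0)) s = Set.univ := by
        ext y
        simp only [Set.mem_pi, Set.mem_univ, iff_true, true_implies]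
        exact fun i => i.elim0
      rw [hset, Set.preimage_univ, measure_univ]
      exact (Finset.prod_of_isEmpty _).symm
    | succ n => exact hQ0box n s hs
  -- marginals of Q0
  have hQ0marg : ∀ k (s : Set ℂ), MeasurableSet s →
      Q0 ((fun α => gammaV α k) ⁻¹' s) = Λ' k s := by
    intro k s hs
    set sbox : Fin (k + 1) → Set ℂ :=
      fun i => if (i : ℕ) = k then s else Set.univ with hsbox
    have hsm : ∀ i, MeasurableSet (sbox i) := by
      intro i
      by_cases hik : (i : ℕ) = k <;> simp [hsbox, hik, hs]
    have hpre : (fun α => fun i : Fin (k + 1) => gammaV α (i : ℕ)) ⁻¹' Set.pi Set.univ sbox =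
        (fun α => gammaV α k) ⁻¹' s := by
      ext α
      simp only [Set.mem_preimage, Set.mem_pi, Set.mem_univ, true_implies]
      constructor
      · intro hall
        have := hall (Fin.last k)
        simpa [hsbox, Fin.val_last] using this
      · intro hk i
        by_cases hik : (i : ℕ) = k
        · simpa [hsbox, hik] using hk
        · simp [hsbox, hik]
      
    have hval := hQ0box k sbox hsm
    rw [hpre] at hval
    rw [hval, Fin.prod_univ_castSucc]
    have hones : ∀ i : Fin k, Λ' ((Fin.castSucc i : Fin (k + 1)) : ℕ) (sbox (Fin.castSucc i)) = 1 := by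
      intro i
      have hik : (i : ℕ) ≠ k := Nat.ne_of_lt i.2
      simp only [hsbox, Fin.coe_castSucc, if_neg hik]
      exact measure_univ
    rw [Finset.prod_congr rfl (fun i _ => hones i), Finset.prod_const_one, one_mul]
    have hlast : sbox (Fin.last k) = s := by simp [hsbox, Fin.val_last]
    rw [hlast, Fin.val_last]
  -- marginals of Q under γ
  have hQmarg : ∀ k (s : Set ℂ), MeasurableSet s →
      Q ((fun α => gammaV α k) ⁻¹' s) = Λ k s := by
    intro k s hs
    set sbox : Fin (k + 1) → Set ℂ :=
      fun i => if (i : ℕ) = k then s else Set.univ with hsbox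
    have hsm : ∀ i, MeasurableSet (sbox i) := by
      intro i
      by_cases hik : (i : ℕ) = k <;> simp [hsbox, hik, hs]
    have hpre : (fun α => fun i : Fin (k + 1) => gammaV α (i : ℕ)) ⁻¹' Set.pi Set.univ sbox =
        (fun α => gammaV α k) ⁻¹' s := by
      ext α
      simp only [Set.mem_preimage, Set.mem_pi, Set.mem_univ, true_implies]
      constructor
      · intro hall
        have := hall (Fin.last k)
        simpa [hsbox, Fin.val_last] using this
      · intro hk i
        by_cases hik : (i : ℕ) = k
        · simpa [hsbox, hik] using hk
        · simp [hsbox, hik]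
    have hval : Q ((fun α => fun i : Fin (k + 1) => gammaV α (i : ℕ)) ⁻¹' Set.pi Set.univ sbox) =
        ∏ i : Fin (k + 1), Λ (i : ℕ) (sbox i) := by
      rw [← Measure.map_apply (measurable_gammaVec (k + 1)) (MeasurableSet.univ_pi hsm),
        map_gammaVec Q hdisk hindep hrot (k + 1), Measure.pi_pi]
    rw [hpre] at hval
    rw [hval, Fin.prod_univ_castSucc]
    have hones : ∀ i : Fin k, Λ ((Fin.castSucc i : Fin (k + 1)) : ℕ) (sbox (Fin.castSucc i)) = 1 := by
      intro i
      have hik : (i : ℕ) ≠ k := Nat.ne_of_lt i.2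
      simp only [hsbox, Fin.coe_castSucc, if_neg hik]
      exact measure_univ
    rw [Finset.prod_congr rfl (fun i _ => hones i), Finset.prod_const_one, one_mul]
    have hlast : sbox (Fin.last k) = s := by simp [hsbox, Fin.val_last]
    rw [hlast, Fin.val_last]
  -- Part 3
  have hpart3 : ∀ k, Q0.map (fun α => gammaV α k) =
      (Q.map (fun α => gammaV α k)).withDensity dens := by
    intro k
    have hQγ : Q.map (fun α => gammaV α k) = Λ k := by
      refine Measure.ext fun s hs => ?_
      rw [Measure.map_apply (measurable_gammaV k) hs, hQmarg k s hs]
    rw [hQγ]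
    refine Measure.ext fun s hs => ?_
    rw [Measure.map_apply (measurable_gammaV k) hs, hQ0marg k s hs]
  -- Part 2
  have hpart2 : iIndepFun (fun k (α : ℕ → ℂ) => gammaV α k) Q0 := by
    rw [iIndepFun_iff_measure_inter_preimage_eq_mul]
    intro S sets hsets
    set n : ℕ := S.sup id + 1 with hn
    have hSn : ∀ k ∈ S, k < n := fun k hk =>
      Nat.lt_succ_of_le (Finset.le_sup (f := id) hk)
    set s : Fin n → Set ℂ :=
      fun i => if h : (i : ℕ) ∈ S then sets (i : ℕ) else Set.univ with hsdef
    have hsm : ∀ i, MeasurableSet (s i) := by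
      intro i
      by_cases h : (i : ℕ) ∈ S
      · simpa [hsdef, h] using hsets (i : ℕ) h
      · simp [hsdef, h]
    have hpre : (⋂ i ∈ S, (fun α => gammaV α i) ⁻¹' sets i) =
        (fun α => fun i : Fin n => gammaV α (i : ℕ)) ⁻¹' Set.pi Set.univ s := by
      ext α
      simp only [Set.mem_iInter, Set.mem_preimage, Set.mem_pi, Set.mem_univ, true_implies]
      constructor
      · intro hall i
        by_cases h : (i : ℕ) ∈ S
        · simpa [hsdef, h] using hall (i : ℕ) h
        · simp [hsdef, h]
      · intro hall k hk
        have := hall ⟨k, hSn k hk⟩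
        simpa [hsdef, hk] using this
    have hval : Q0 ((fun α => fun i : Fin n => gammaV α (i : ℕ)) ⁻¹' Set.pi Set.univ s) =
        ∏ i : Fin n, Λ' (i : ℕ) (s i) := by
      rw [← Measure.map_apply (measurable_gammaVec n) (MeasurableSet.univ_pi hsm),
        hpart1 n, Measure.pi_pi]
    rw [hpre, hval]
    have hstep1 : ∏ i : Fin n, Λ' (i : ℕ) (s i) =
        ∏ k ∈ Finset.range n, Λ' k (if k ∈ S then sets k else Set.univ) := by
      rw [← Fin.prod_univ_eq_prod_range (fun k => Λ' k (if k ∈ S then sets k else Set.univ)) n]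
      refine Finset.prod_congr rfl fun i _ => ?_
      by_cases h : (i : ℕ) ∈ S <;> simp [hsdef, h]
    have hstep2 : ∏ k ∈ Finset.range n, Λ' k (if k ∈ S then sets k else Set.univ) =
        ∏ k ∈ S, Λ' k (if k ∈ S then sets k else Set.univ) := by
      refine (Finset.prod_subset (fun k hk => Finset.mem_range.2 (hSn k hk)) ?_).symm
      intro k _ hk
      simp [hk, measure_univ]
    rw [hstep1, hstep2]
    refine Finset.prod_congr rfl fun k hk => ?_
    rw [if_pos hk, hQ0marg k (sets k) (hsets k hk)]
  exact ⟨hpart1, hpart2, hpart3⟩
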